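/- Let α > 0 and σ ≥ 0 be real with α > 2σ², and set ω* := √(α(α−2σ²)). Then for every integer ℓ with |ℓ| ≠ 1, one has iω*ℓ + α − √(2α)·√(iω*ℓ + σ²) ≠ 0 (principal square root). Consequently, if v ∈ L² of the circle ℝ/2πℤ (complex-valued) satisfies (iω*ℓ + α − √(2α)·√(iω*ℓ + σ²))·(fourier coefficient of v at ℓ) = 0 for every ℓ ∈ ℤ, then all Fourier coefficients of v with index |ℓ| ≠ 1 vanish, i.e. v(s) = c₁e^{is} + c₂e^{−is} almost everywhere for some c₁, c₂ ∈ ℂ. -/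

import Mathlib

open MeasureTheory

/-- Principal complex square root: branch cut along `(-∞,0]`, `Re (csqrt z) ≥ 0`. -/
noncomputable def csqrt (z : ℂ) : ℂ := z ^ (1/2 : ℂ)

instance : Fact (0 < 2 * Real.pi) := ⟨by positivity⟩

lemma csqrt_sq {z : ℂ} (hz : z ≠ 0) : csqrt z ^ 2 = z := by
  rw [csqrt, sq, ← Complex.cpow_add _ _ hz]
  norm_num

/-- For `α > 2σ² ≥ 0`, `ω* = √(α(α−2σ²))`: for every integer `ℓ`
with `|ℓ| ≠ 1` one has `𝕕(iω*ℓ;0,σ) = iω*ℓ + α − √(2α)√(iω*ℓ+σ²) ≠ 0`. Consequently,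
if `v ∈ L²` of the circle satisfies `𝕕(iω*ℓ;0,σ)·(fourierCoeff v ℓ) = 0` for all
`ℓ ∈ ℤ`, then `v(s) = c₁e^{is} + c₂e^{−is}` almost everywhere for some `c₁, c₂ ∈ ℂ`. -/
theorem stmt_9 (α σ : ℝ) (hα : 0 < α) (hσ : 0 ≤ σ) (h2 : 2*σ^2 < α) :
    (∀ ℓ : ℤ, |ℓ| ≠ 1 →
      Complex.I * (Real.sqrt (α*(α - 2*σ^2)) * ℓ) + α
        - Real.sqrt (2*α) * csqrt (Complex.I * (Real.sqrt (α*(α - 2*σ^2)) * ℓ) + (σ:ℂ)^2) ≠ 0) ∧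
    (∀ v : AddCircle (2 * Real.pi) → ℂ,
      MemLp v 2 AddCircle.haarAddCircle →
      (∀ ℓ : ℤ,
        (Complex.I * (Real.sqrt (α*(α - 2*σ^2)) * ℓ) + α
          - Real.sqrt (2*α) * csqrt (Complex.I * (Real.sqrt (α*(α - 2*σ^2)) * ℓ) + (σ:ℂ)^2))
          * fourierCoeff v ℓ = 0) →
      ∃ c₁ c₂ : ℂ, ∀ᵐ s ∂(AddCircle.haarAddCircle),
        v s = c₁ * fourier 1 s + c₂ * fourier (-1) s) := by
  have hαβ : 0 < α - 2*σ^2 := by linarith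
  set ω : ℝ := Real.sqrt (α*(α - 2*σ^2)) with hωdef
  have hω2 : ω^2 = α*(α - 2*σ^2) := Real.sq_sqrt (by positivity)
  have key : ∀ ℓ : ℤ, |ℓ| ≠ 1 →
      Complex.I * (ω * ℓ) + α - Real.sqrt (2*α) * csqrt (Complex.I * (ω * ℓ) + (σ:ℂ)^2) ≠ 0 := by
    intro ℓ hℓ hd
    set z : ℂ := Complex.I * (ω * ℓ) + (σ:ℂ)^2 with hzdef
    have hA : (Complex.I * (ω * ℓ) + α) = Real.sqrt (2*α) * csqrt z := by
      linear_combination hd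
    by_cases hz : z = 0
    · rw [hz] at hA
      have : csqrt 0 = 0 := by
        simp [csqrt, Complex.zero_cpow (by norm_num : (1/2:ℂ) ≠ 0)]
      rw [this, mul_zero] at hA
      have := congrArg Complex.re hA
      simp at this
      linarith
    · have hsq : (Complex.I * (ω * ℓ) + α)^2 = (2*α : ℝ) * z := by
        rw [hA, mul_pow, csqrt_sq hz]
        congr 1
        rw [← Complex.ofReal_pow, Real.sq_sqrt (by positivity)]
      have hre := congrArg Complex.re hsq
      have him : (Complex.I * (ω * ℓ) + α)^2 = α^2 - (ω*ℓ)^2 + Complex.I * (2*α*(ω*ℓ)) := by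
        push_cast
        ring_nf
        rw [Complex.I_sq]
        ring
      rw [hzdef] at hre
      simp [Complex.add_re, Complex.mul_re, Complex.mul_im, pow_two] at hre
      -- hre should now be a real equation
      have hprod : α*(α-2*σ^2)*(((ℓ:ℝ))^2 - 1) = 0 := by
        linear_combination (-1:ℝ)*hre - ((ℓ:ℝ))^2*hω2
      have hL2 : ((ℓ:ℝ))^2 = 1 := by
        have hne : α*(α-2*σ^2) ≠ 0 := by positivity
        have := (mul_eq_zero.mp hprod).resolve_left hne
        linarith
      have : (ℓ:ℤ)^2 = 1 := by exact_mod_cast hL2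
      have : |ℓ| = 1 := by nlinarith [abs_nonneg ℓ, sq_abs ℓ]
      exact hℓ this
  refine ⟨key, ?_⟩
  intro v hv hc
  have hcoeff : ∀ ℓ : ℤ, |ℓ| ≠ 1 → fourierCoeff v ℓ = 0 := fun ℓ hℓ =>
    (mul_eq_zero.mp (hc ℓ)).resolve_left (key ℓ hℓ)
  set f : Lp ℂ 2 (AddCircle.haarAddCircle) := hv.toLp v with hfdef
  have hvf : v =ᵐ[AddCircle.haarAddCircle] f := (hv.coeFn_toLp).symm
  have hcf : ∀ ℓ : ℤ, fourierCoeff (f : AddCircle (2*Real.pi) → ℂ) ℓ = fourierCoeff v ℓ := by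
    intro ℓ
    apply integral_congr_ae
    filter_upwards [hvf] with t ht
    rw [ht]
  set c₁ := fourierCoeff v 1 with hc1
  set c₂ := fourierCoeff v (-1) with hc2
  have hb : ∀ n : ℤ, ((fourierBasis (T := 2*Real.pi)) n : Lp ℂ 2 AddCircle.haarAddCircle) = fourierLp 2 n :=
    fun n => congrFun coe_fourierBasis n
  have hfg : f = c₁ • fourierLp 2 1 + c₂ • fourierLp 2 (-1) := by
    apply (fourierBasis (T := 2*Real.pi)).repr.injective
    ext i
    rw [fourierBasis_repr, hcf i, map_add, _root_.map_smul, _root_.map_smul,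
      ← hb 1, ← hb (-1), HilbertBasis.repr_self, HilbertBasis.repr_self]
    simp only [lp.coeFn_add, Pi.add_apply, lp.coeFn_smul, Pi.smul_apply, smul_eq_mul]
    by_cases h1 : i = 1
    · simp [h1, lp.single_apply, hc1]
    · by_cases h2 : i = -1
      · simp [h2, lp.single_apply, hc2]
      · simp only [lp.single_apply, Pi.single_apply, if_neg h1, if_neg h2, mul_zero, add_zero]
        apply hcoeff
        intro habs
        rcases (abs_eq (by norm_num : (0:ℤ) ≤ 1)).mp habs with h | h
        exacts [h1 h, h2 h]
  refine ⟨c₁, c₂, ?_⟩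
  filter_upwards [hvf,
    Lp.coeFn_add (c₁ • fourierLp (T := 2*Real.pi) 2 1) (c₂ • fourierLp (T := 2*Real.pi) 2 (-1)),
    Lp.coeFn_smul c₁ (fourierLp (T := 2*Real.pi) 2 1),
    Lp.coeFn_smul c₂ (fourierLp (T := 2*Real.pi) 2 (-1)),
    coeFn_fourierLp (T := 2*Real.pi) 2 1,
    coeFn_fourierLp (T := 2*Real.pi) 2 (-1)] with s h0 h1 h2 h3 h4 h5
  rw [h0, hfg, h1, Pi.add_apply, h2, h3, Pi.smul_apply, Pi.smul_apply,
    smul_eq_mul, smul_eq_mul, h4, h5]
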